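/- arXiv:2210.11031 — 2 statements merged into one kernel-verified Lean document; each statement's English description precedes it below -/
import Mathlib

section
/- Let θ₀ ∈ (0, π/6), β ∈ (0,1), and c > 0. If ψ is subharmonic on the open unit disc 𝔻 ⊂ ℂ with sup_𝔻 ψ ≤ c and limsup_{z→e^{iθ}} ψ(z) ≤ c|θ|^β for all θ ∈ (−θ₀, θ₀), then there is a constant C depending only on (θ₀, β, c) such that ψ(z) ≤ C|1−z|^β for all z ∈ 𝔻. -/
noncomputable section
open Complex MeasureTheory Filter Metric Set Real

/-- The mean of `f` over the circle of center `z` and radius `r`. -/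
def circleMean (f : ℂ → ℝ) (z : ℂ) (r : ℝ) : ℝ :=
  (2 * π)⁻¹ * ∫ θ in (0:ℝ)..(2 * π), f (z + r * Complex.exp (θ * Complex.I))

/-- Subharmonicity on an open set, via upper semicontinuity and the sub-mean value
inequality on circles. -/
def SubharmonicOn (f : ℂ → ℝ) (U : Set ℂ) : Prop :=
  UpperSemicontinuousOn f U ∧
    ∀ z ∈ U, ∀ r : ℝ, 0 < r → closedBall z r ⊆ U → f z ≤ circleMean f z r

-- geometry lemma
lemma geo {θ : ℝ} (hθπ : |θ| ≤ π)
    (habs : ‖1 - Complex.exp (θ * Complex.I)‖ < 1) :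
    2 / π * |θ| ≤ ‖1 - Complex.exp (θ * Complex.I)‖ := by
  have hπ := Real.pi_pos
  rcases le_or_gt (|θ|) (π/2) with hle | hlt
  · calc 2 / π * |θ| ≤ |Real.sin θ| := Real.mul_abs_le_abs_sin hle
    _ = |(1 - Complex.exp (θ * Complex.I)).im| := by
        simp [Complex.exp_mul_I, Complex.sub_im, Complex.one_im, Complex.add_im,
          Complex.mul_im, Complex.sin_ofReal_re, Complex.sin_ofReal_im,
          Complex.cos_ofReal_im, Complex.I_re, Complex.I_im, Complex.cos_ofReal_re, abs_neg]
    _ ≤ ‖1 - Complex.exp (θ * Complex.I)‖ := Complex.abs_im_le_norm _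
  · exfalso
    have hcos : Real.cos θ ≤ 0 := by
      rw [← Real.cos_abs]
      exact Real.cos_nonpos_of_pi_div_two_le_of_le hlt.le (by linarith)
    have hre : (1 : ℝ) ≤ (1 - Complex.exp (θ * Complex.I)).re := by
      simp only [Complex.exp_mul_I, Complex.sub_re, Complex.one_re, Complex.add_re,
        Complex.mul_re, Complex.sin_ofReal_re, Complex.sin_ofReal_im,
        Complex.cos_ofReal_im, Complex.I_re, Complex.I_im, Complex.cos_ofReal_re]
      ring_nf
      linarith
    have := (Complex.re_le_norm (1 - Complex.exp (θ * Complex.I)))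
    linarith

-- pointwise bounds for the harmonic comparison function
lemma Fbounds {β : ℝ} (hβ : β ∈ Set.Ioo (0:ℝ) 1) {z : ℂ} (hz : ‖z‖ < 1) :
    Real.cos (β * π / 2) * ‖1 - z‖ ^ β
      ≤ (Complex.exp (β * Complex.log (1 - z))).re ∧
    (Complex.exp (β * Complex.log (1 - z))).re ≤ ‖1 - z‖ ^ β := by
  have hπ := Real.pi_pos
  obtain ⟨hβ0, hβ1⟩ := hβ
  set w := 1 - z with hw
  have hwre : 0 < w.re := by
    have := Complex.re_le_norm z
    simp only [hw, Complex.sub_re, Complex.one_re]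
    linarith
  have hw0 : w ≠ 0 := fun h => by simp [h] at hwre
  have ha : 0 < ‖w‖ := norm_pos_iff.mpr hw0
  have hre : ((β : ℂ) * Complex.log w).re = β * Real.log (‖w‖) := by
    simp [Complex.mul_re, Complex.ofReal_re, Complex.ofReal_im, Complex.log_re]
  have him : ((β : ℂ) * Complex.log w).im = β * Complex.arg w := by
    simp [Complex.mul_im, Complex.ofReal_re, Complex.ofReal_im, Complex.log_im]
  have hexp : Real.exp (β * Real.log (‖w‖)) = ‖w‖ ^ β := by
    rw [Real.rpow_def_of_pos ha, mul_comm]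
  have harg : |Complex.arg w| < π / 2 :=
    Complex.abs_arg_lt_pi_div_two_iff.2 (Or.inl hwre)
  have habs : |β * Complex.arg w| ≤ β * π / 2 := by
    rw [abs_mul, abs_of_pos hβ0]
    calc β * |Complex.arg w| ≤ β * (π / 2) := by nlinarith [abs_nonneg (Complex.arg w)]
    _ = β * π / 2 := by ring
  have hcos : Real.cos (β * π / 2) ≤ Real.cos (β * Complex.arg w) := by
    rw [← Real.cos_abs (β * Complex.arg w)]
    exact Real.cos_le_cos_of_nonneg_of_le_pi (abs_nonneg _) (by nlinarith) habs
  have hformula : (Complex.exp ((β : ℂ) * Complex.log w)).re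
      = ‖w‖ ^ β * Real.cos (β * Complex.arg w) := by
    rw [Complex.exp_re, hre, him, hexp]
  constructor
  · rw [hformula]
    have : 0 ≤ ‖w‖ ^ β := (Real.rpow_pos_of_pos ha β).le
    nlinarith
  · rw [hformula]
    nlinarith [Real.cos_le_one (β * Complex.arg w), (Real.rpow_pos_of_pos ha β).le]

lemma Fdiff {β : ℝ} {z : ℂ} (hz : ‖z‖ < 1) :
    DifferentiableAt ℂ (fun z => Complex.exp (β * Complex.log (1 - z))) z := by
  have hslit : (1 - z) ∈ Complex.slitPlane := by
    left
    have := Complex.re_le_norm z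
    simp only [Complex.sub_re, Complex.one_re]
    linarith
  have h1 : DifferentiableAt ℂ (fun z : ℂ => 1 - z) z :=
    (differentiableAt_const _).sub differentiableAt_id
  exact (((Complex.differentiableAt_log hslit).comp z h1).const_mul _).cexp

lemma meanValueF (β : ℝ) {y : ℂ} {r : ℝ} (hr : 0 < r)
    (hsub : closedBall y r ⊆ ball (0:ℂ) 1) :
    (∫ θ in (0:ℝ)..(2*π), (Complex.exp (β * Complex.log (1 - circleMap y r θ))).re)
      = 2 * π * (Complex.exp (β * Complex.log (1 - y))).re := by
  set F : ℂ → ℂ := fun z => Complex.exp (β * Complex.log (1 - z)) with hF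
  have hdiff : ∀ z ∈ closedBall y r, DifferentiableAt ℂ F z := fun z hz =>
    Fdiff (by simpa [Complex.dist_eq] using hsub hz)
  have hcont : ContinuousOn F (closedBall y r) := fun z hz =>
    (hdiff z hz).continuousAt.continuousWithinAt
  have hd : ∀ x ∈ ball y r \ (∅ : Set ℂ), DifferentiableAt ℂ F x := fun x hx =>
    hdiff x (ball_subset_closedBall hx.1)
  have hcauchy := Complex.two_pi_I_inv_smul_circleIntegral_sub_inv_smul_of_differentiable_on_off_countable
    countable_empty (mem_ball_self hr) hcont hd
  have hkey : ∀ θ : ℝ, deriv (circleMap y r) θ •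
      ((circleMap y r θ - y)⁻¹ • F (circleMap y r θ)) = Complex.I * F (circleMap y r θ) := by
    intro θ
    have hne : circleMap 0 r θ ≠ 0 := by
      rw [show circleMap 0 r θ = circleMap 0 r θ - 0 by ring, sub_ne_zero]
      exact circleMap_ne_center hr.ne'
    rw [deriv_circleMap, smul_eq_mul, smul_eq_mul]
    have hsubeq : circleMap y r θ - y = circleMap 0 r θ := by simp [circleMap]
    rw [hsubeq]
    field_simp
  have hint : (∮ z in C(y, r), (z - y)⁻¹ • F z)
      = Complex.I * ∫ θ in (0:ℝ)..(2*π), F (circleMap y r θ) := by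
    rw [show (∮ z in C(y, r), (z - y)⁻¹ • F z) = ∫ θ in (0:ℝ)..(2*π),
        deriv (circleMap y r) θ • ((circleMap y r θ - y)⁻¹ • F (circleMap y r θ)) from rfl]
    rw [intervalIntegral.integral_congr (g := fun θ => Complex.I * F (circleMap y r θ))
      (fun θ _ => hkey θ)]
    exact intervalIntegral.integral_const_mul _ _
  rw [hint, smul_eq_mul] at hcauchy
  have hJ : (∫ θ in (0:ℝ)..(2*π), F (circleMap y r θ)) = 2 * π * F y := by
    have h2πI : (2 * (π:ℂ) * Complex.I) ≠ 0 := by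
      simp [Real.pi_ne_zero, Complex.I_ne_zero, Complex.ofReal_ne_zero]
    field_simp at hcauchy
    have h3 : Complex.I * (∫ θ in (0:ℝ)..(2*π), F (circleMap y r θ))
        = Complex.I * (2 * ↑π * F y) := by rw [hcauchy]
    exact mul_left_cancel₀ Complex.I_ne_zero h3
  have hcc : Continuous fun θ : ℝ => F (circleMap y r θ) := by
    apply continuous_iff_continuousAt.2
    intro θ
    exact ((hdiff _ (sphere_subset_closedBall (circleMap_mem_sphere y hr.le θ))).continuousAt.comp
      (continuous_circleMap y r).continuousAt)
  have hre := Complex.reCLM.intervalIntegral_comp_comm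
    (hcc.intervalIntegrable (μ := volume) (0:ℝ) (2*π))
  show (∫ θ in (0:ℝ)..(2*π), (F (circleMap y r θ)).re) = 2 * π * (F y).re
  calc (∫ θ in (0:ℝ)..(2*π), (F (circleMap y r θ)).re)
      = Complex.reCLM (∫ θ in (0:ℝ)..(2*π), F (circleMap y r θ)) := by
        rw [← hre]; rfl
    _ = 2 * π * (F y).re := by rw [hJ]; simp

lemma strict_mean {f : ℝ → ℝ} {s s' t₀ : ℝ}
    (hint : IntervalIntegrable f volume 0 (2*π))
    (hle : ∀ θ, f θ ≤ s) (hs' : s' < s) (ht₀ : t₀ ∈ Set.Ioc 0 (2*π))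
    (hev : ∀ᶠ θ in nhds t₀, f θ < s') :
    (∫ θ in (0:ℝ)..(2*π), f θ) < 2*π*s := by
  obtain ⟨η, hη, hball⟩ := Metric.eventually_nhds_iff.1 hev
  obtain ⟨ht₀0, ht₀2π⟩ := ht₀
  set m := min η t₀ with hm
  have hm0 : 0 < m := lt_min hη ht₀0
  set a := t₀ - m/2 with ha
  set b := t₀ - m/4 with hb
  have ha0 : 0 ≤ a := by
    have : m ≤ t₀ := min_le_right _ _
    simp only [ha]; linarith
  have hab : a < b := by simp only [ha, hb]; linarith
  have hb2π : b ≤ 2*π := by simp only [hb]; linarith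
  have hfab : ∀ θ ∈ Set.Icc a b, f θ ≤ s' := by
    intro θ hθ
    refine (hball ?_).le
    rw [Real.dist_eq, abs_lt]
    obtain ⟨h1, h2⟩ := hθ
    constructor
    · simp only [ha] at h1; have : m ≤ η := min_le_left _ _; linarith
    · simp only [hb] at h2; linarith
  have hmono : ∀ p q : ℝ, 0 ≤ p → p ≤ q → q ≤ 2*π → IntervalIntegrable f volume p q := by
    intro p q hp hpq hq
    refine hint.mono_set ?_
    rw [Set.uIcc_of_le hpq, Set.uIcc_of_le Real.two_pi_pos.le]
    exact Set.Icc_subset_Icc hp hq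
  have hsub1 : IntervalIntegrable f volume 0 a := hmono 0 a le_rfl ha0 (by linarith)
  have hsub2 : IntervalIntegrable f volume a b := hmono a b ha0 hab.le hb2π
  have hsub3 : IntervalIntegrable f volume b (2*π) := hmono b (2*π) (by linarith) hb2π le_rfl
  have hsplit : (∫ θ in (0:ℝ)..(2*π), f θ)
      = (∫ θ in (0:ℝ)..a, f θ) + (∫ θ in a..b, f θ) + (∫ θ in b..(2*π), f θ) := by
    rw [intervalIntegral.integral_add_adjacent_intervals hsub1 hsub2,
      intervalIntegral.integral_add_adjacent_intervals (hsub1.trans hsub2) hsub3]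
  have h1 : (∫ θ in (0:ℝ)..a, f θ) ≤ a * s := by
    have := intervalIntegral.integral_mono_on ha0 hsub1
      (intervalIntegrable_const (c := s)) (fun θ _ => hle θ)
    simpa using this
  have h2 : (∫ θ in a..b, f θ) ≤ (b - a) * s' := by
    have := intervalIntegral.integral_mono_on hab.le hsub2
      (intervalIntegrable_const (c := s')) hfab
    simpa using this
  have h3 : (∫ θ in b..(2*π), f θ) ≤ (2*π - b) * s := by
    have := intervalIntegral.integral_mono_on hb2π hsub3
      (intervalIntegrable_const (c := s)) (fun θ _ => hle θ)
    simpa using this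
  have hba : 0 < b - a := by linarith
  nlinarith [hsplit]

set_option maxHeartbeats 2000000 in
/-- If `ψ` is subharmonic on the unit disc, bounded above by `c`, and its boundary
`limsup` at `e^{iθ}` is at most `c|θ|^β` for `θ ∈ (-θ₀, θ₀)`, then
`ψ(z) ≤ C|1-z|^β` with `C` depending only on `(θ₀, β, c)`. -/
theorem boundary_holder_bound_subharmonic
    (θ₀ β c : ℝ) (hθ : θ₀ ∈ Set.Ioo 0 (π / 6)) (hβ : β ∈ Set.Ioo (0:ℝ) 1) (hc : 0 < c) :
    ∃ C : ℝ, ∀ ψ : ℂ → ℝ, SubharmonicOn ψ (ball 0 1) →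
      (∀ z ∈ ball (0:ℂ) 1, ψ z ≤ c) →
      (∀ θ : ℝ, θ ∈ Set.Ioo (-θ₀) θ₀ →
        Filter.limsup ψ (nhdsWithin (Complex.exp (θ * Complex.I)) (ball 0 1))
          ≤ c * |θ| ^ β) →
      ∀ z ∈ ball (0:ℂ) 1, ψ z ≤ C * ‖1 - z‖ ^ β := by
  obtain ⟨hθ0, hθπ6⟩ := hθ
  obtain ⟨hβ0, hβ1⟩ := hβ
  have hπ := Real.pi_pos
  have hπ4 : π < 4 := by nlinarith [Real.pi_lt_d2]
  set κ := Real.cos (β * π / 2) with hκdef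
  have hκ : 0 < κ := Real.cos_pos_of_mem_Ioo ⟨by nlinarith, by nlinarith⟩
  set δ := θ₀ / 2 with hδdef
  have hδ : 0 < δ := by rw [hδdef]; linarith
  have hδ1 : δ < 1 := by rw [hδdef]; nlinarith
  have hδβ : 0 < δ ^ β := Real.rpow_pos_of_pos hδ β
  set A := (c * (π/2) ^ β + c / δ ^ β) / κ with hAdef
  have hπ2β : (0:ℝ) < (π/2) ^ β := Real.rpow_pos_of_pos (by linarith) β
  have hA : 0 < A := by
    rw [hAdef]
    have : 0 < c / δ ^ β := div_pos hc hδβ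
    positivity
  have hAκ : A * κ = c * (π/2) ^ β + c / δ ^ β := by
    rw [hAdef]; field_simp
  refine ⟨A + c / δ ^ β, ?_⟩
  intro ψ hψ hbdd hbry
  set F : ℂ → ℂ := fun z => Complex.exp (β * Complex.log (1 - z)) with hFdef
  set hfun : ℂ → ℝ := fun z => (F z).re with hfundef
  set u : ℂ → ℝ := fun z => ψ z - A * hfun z with hudef
  set Ω : Set ℂ := ball (0:ℂ) 1 ∩ ball 1 δ with hΩdef
  have hmem0 : ∀ w : ℂ, w ∈ ball (0:ℂ) 1 ↔ ‖w‖ < 1 := by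
    intro w; rw [mem_ball, Complex.dist_eq, sub_zero]
  have hmem1 : ∀ w : ℂ, w ∈ ball (1:ℂ) δ ↔ ‖1 - w‖ < δ := by
    intro w; rw [mem_ball, Complex.dist_eq, ← norm_sub_rev]
  have hΩsub : Ω ⊆ ball (0:ℂ) 1 := inter_subset_left
  have hΩopen : IsOpen Ω := isOpen_ball.inter isOpen_ball
  have hmeanh : ∀ (y : ℂ) (r : ℝ), 0 < r → closedBall y r ⊆ ball (0:ℂ) 1 →
      (∫ θ in (0:ℝ)..(2*π), hfun (y + r * Complex.exp (θ * Complex.I))) = 2*π * hfun y := by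
    intro y r hr hsub
    have h := meanValueF β hr hsub
    simp only [circleMap] at h
    exact h
  have hueq : ∀ w, u w = ψ w - A * hfun w := fun w => rfl
  have hfb : ∀ w : ℂ, ‖w‖ < 1 →
      κ * ‖1 - w‖ ^ β ≤ hfun w ∧ hfun w ≤ ‖1 - w‖ ^ β :=
    fun w hw => Fbounds ⟨hβ0, hβ1⟩ hw
  have hconth : ∀ w : ℂ, ‖w‖ < 1 → ContinuousAt hfun w := fun w hw =>
    Complex.continuous_re.continuousAt.comp (Fdiff hw).continuousAt
  clear_value F hfun u κ δ A
  clear hFdef hfundef hudef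
  have hfpos : ∀ w : ℂ, ‖w‖ < 1 → 0 < hfun w := by
    intro w hw
    have h1 : (1 - w) ≠ 0 := by
      intro h
      have : w = 1 := by linear_combination -h
      rw [this] at hw; simp at hw
    have h3 := (hfb w hw).1
    have h2 : 0 < ‖1 - w‖ ^ β := Real.rpow_pos_of_pos (norm_pos_iff.mpr h1) β
    linarith [mul_pos hκ h2]
  -- upper semicontinuity of u within Ω
  have husc_u : ∀ p ∈ Ω, ∀ y : ℝ, u p < y → ∀ᶠ w in nhdsWithin p Ω, u w < y := by
    intro p hp y hy
    have hpball : p ∈ ball (0:ℂ) 1 := hΩsub hp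
    have hpabs : ‖p‖ < 1 := (hmem0 p).1 hpball
    set ε₂ := (y - u p)/2 with hε₂
    have hε₂pos : 0 < ε₂ := by rw [hε₂]; linarith
    have hev1 := hψ.1 p hpball (ψ p + ε₂) (lt_add_of_pos_right _ hε₂pos)
    have hev1' : ∀ᶠ w in nhdsWithin p Ω, ψ w < ψ p + ε₂ :=
      hev1.filter_mono (nhdsWithin_mono p hΩsub)
    have hcA : Filter.Tendsto (fun w => A * hfun w) (nhds p) (nhds (A * hfun p)) :=
      continuousAt_const.mul (hconth p hpabs)
    have hev2 : ∀ᶠ w in nhds p, A * hfun p - ε₂ < A * hfun w :=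
      hcA.eventually (eventually_gt_nhds (by linarith))
    filter_upwards [hev1', hev2.filter_mono nhdsWithin_le_nhds] with w h1 h2
    have hup : u p = ψ p - A * hfun p := hueq p
    have huw : u w = ψ w - A * hfun w := hueq w
    rw [huw]; rw [hup] at hε₂; linarith
  have hclosure : closure Ω ⊆ closedBall (0:ℂ) 1 ∩ closedBall 1 δ := by
    refine (closure_inter_subset_inter_closure _ _).trans ?_
    rw [closure_ball (0:ℂ) one_ne_zero, closure_ball (1:ℂ) hδ.ne']
  -- boundary estimate
  have hbound : ∀ ζ ∈ closure Ω, ζ ∉ Ω → ∀ ε : ℝ, 0 < ε →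
      ∀ᶠ w in nhdsWithin ζ Ω, u w < ε := by
    intro ζ hζcl hζn ε hε
    obtain ⟨hζ1, hζδ⟩ := hclosure hζcl
    have hζabs : ‖ζ‖ ≤ 1 := by
      rw [mem_closedBall, Complex.dist_eq, sub_zero] at hζ1; exact hζ1
    have hζ1δ : ‖1 - ζ‖ ≤ δ := by
      rw [mem_closedBall, Complex.dist_eq, ← norm_sub_rev] at hζδ
      exact hζδ
    rcases lt_or_eq_of_le hζabs with hlt | heq
    · -- ζ is in the open unit disc, so |1-ζ| ≥ δ and everything is pointwise
      have hζball : ζ ∈ ball (0:ℂ) 1 := (hmem0 ζ).2 hlt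
      have hge : δ ≤ ‖1 - ζ‖ := by
        by_contra hcon
        push_neg at hcon
        exact hζn ⟨hζball, (hmem1 ζ).2 hcon⟩
      have hrpow : δ ^ β ≤ ‖1 - ζ‖ ^ β :=
        Real.rpow_le_rpow hδ.le hge hβ0.le
      have hch : c ≤ A * hfun ζ := by
        have h1 := (hfb ζ hlt).1
        have h2 : c ≤ A * κ * δ ^ β := by
          rw [hAκ]
          have h3 : c / δ ^ β * δ ^ β = c := div_mul_cancel₀ c hδβ.ne'
          linarith [h3, mul_pos (mul_pos hc hπ2β) hδβ]
        calc c ≤ A * κ * δ ^ β := h2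
          _ ≤ A * κ * ‖1 - ζ‖ ^ β :=
              mul_le_mul_of_nonneg_left hrpow (mul_pos hA hκ).le
          _ = A * (κ * ‖1 - ζ‖ ^ β) := by ring
          _ ≤ A * hfun ζ := mul_le_mul_of_nonneg_left h1 hA.le
      have hev1 := hψ.1 ζ hζball (ψ ζ + ε/2) (lt_add_of_pos_right _ (by linarith))
      have hev1' : ∀ᶠ w in nhdsWithin ζ Ω, ψ w < ψ ζ + ε/2 :=
        hev1.filter_mono (nhdsWithin_mono ζ hΩsub)
      have hcA : Filter.Tendsto (fun w => A * hfun w) (nhds ζ) (nhds (A * hfun ζ)) :=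
        continuousAt_const.mul (hconth ζ hlt)
      have hev2 : ∀ᶠ w in nhds ζ, A * hfun ζ - ε/2 < A * hfun w :=
        hcA.eventually (eventually_gt_nhds (by linarith))
      have hψζ : ψ ζ ≤ c := hbdd ζ hζball
      filter_upwards [hev1', hev2.filter_mono nhdsWithin_le_nhds] with w h1 h2
      have huw : u w = ψ w - A * hfun w := hueq w
      rw [huw]; linarith
    · -- ζ is on the unit circle
      set θζ := Complex.arg ζ with hθζdef
      have hζexp : Complex.exp (θζ * Complex.I) = ζ := by
        have h := Complex.norm_mul_exp_arg_mul_I ζ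
        rw [heq, Complex.ofReal_one, one_mul] at h
        exact h
      have hθπ : |θζ| ≤ π := Complex.abs_arg_le_pi ζ
      have hζδ1 : ‖1 - ζ‖ < 1 := lt_of_le_of_lt hζ1δ hδ1
      have hgeo : 2/π * |θζ| ≤ ‖1 - ζ‖ := by
        rw [← hζexp] at hζδ1 ⊢
        exact geo hθπ hζδ1
      have hθhalf : |θζ| ≤ π/2 * ‖1 - ζ‖ := by
        have h1 := mul_le_mul_of_nonneg_left hgeo (by positivity : (0:ℝ) ≤ π/2)
        have h2 : π/2 * (2/π * |θζ|) = |θζ| := by field_simp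
        linarith
      have hθsmall : |θζ| < θ₀ := by
        have h3 : π/2 * ‖1 - ζ‖ ≤ π/2 * δ :=
          mul_le_mul_of_nonneg_left hζ1δ (by positivity)
        rw [hδdef] at h3
        nlinarith
      have hmemθ : θζ ∈ Set.Ioo (-θ₀) θ₀ := by
        obtain ⟨h1, h2⟩ := abs_lt.1 hθsmall
        exact ⟨h1, h2⟩
      have hlim := hbry θζ hmemθ
      rw [hζexp] at hlim
      have hbun : Filter.IsBoundedUnder (· ≤ ·) (nhdsWithin ζ (ball (0:ℂ) 1)) ψ :=
        ⟨c, Filter.eventually_map.2 (eventually_mem_nhdsWithin.mono (fun w hw => hbdd w hw))⟩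
      have hev1 : ∀ᶠ w in nhdsWithin ζ (ball (0:ℂ) 1), ψ w < c * |θζ| ^ β + ε/2 :=
        Filter.eventually_lt_of_limsup_lt (by linarith) hbun
      have hev1' : ∀ᶠ w in nhdsWithin ζ Ω, ψ w < c * |θζ| ^ β + ε/2 :=
        hev1.filter_mono (nhdsWithin_mono ζ hΩsub)
      set g : ℂ → ℝ := fun w => ‖1 - w‖ ^ β with hgdef
      have hgcont : Continuous g := by
        apply Continuous.rpow_const
        · exact continuous_norm.comp (continuous_const.sub continuous_id)
        · exact fun x => Or.inr hβ0.le
      have hgval : ∀ w, g w = ‖1 - w‖ ^ β := fun w => rfl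
      clear_value g
      have hAκ0 : (0:ℝ) < A * κ := mul_pos hA hκ
      set ε' := ε / (2 * (A * κ)) with hε'def
      have hε' : 0 < ε' := by
        rw [hε'def]; exact div_pos hε (by linarith)
      have hev2 : ∀ᶠ w in nhds ζ, g ζ - ε' < g w :=
        hgcont.continuousAt.eventually (eventually_gt_nhds (by linarith))
      have hrw1 : ((π/2 : ℝ)) ^ β * (2/π) ^ β = 1 := by
        rw [← Real.mul_rpow (by positivity) (by positivity),
          show (π/2) * (2/π) = 1 by field_simp]
        exact Real.one_rpow β
      have hgζ1 : (2/π) ^ β * |θζ| ^ β ≤ g ζ := by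
        rw [hgval, ← Real.mul_rpow (by positivity) (abs_nonneg _)]
        exact Real.rpow_le_rpow (by positivity) hgeo hβ0.le
      have hkey1 : c * |θζ| ^ β ≤ A * κ * g ζ := by
        have h1 : c * (π/2) ^ β ≤ A * κ := by
          rw [hAκ]
          have : 0 < c / δ ^ β := div_pos hc hδβ
          linarith
        calc c * |θζ| ^ β = (c * (π/2) ^ β) * ((2/π) ^ β * |θζ| ^ β) := by
              rw [show (c * (π/2) ^ β) * ((2/π) ^ β * |θζ| ^ β)
                = c * ((π/2) ^ β * (2/π) ^ β) * |θζ| ^ β by ring, hrw1]; ring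
          _ ≤ (A * κ) * ((2/π) ^ β * |θζ| ^ β) := by
              apply mul_le_mul_of_nonneg_right h1
              positivity
          _ ≤ (A * κ) * g ζ := mul_le_mul_of_nonneg_left hgζ1 hAκ0.le
      have hAκε : A * κ * ε' = ε / 2 := by
        rw [hε'def]; field_simp
      filter_upwards [hev1', hev2.filter_mono nhdsWithin_le_nhds,
        eventually_mem_nhdsWithin] with w h1 h2 hwΩ
      have hwabs : ‖w‖ < 1 := (hmem0 w).1 (hΩsub hwΩ)
      have h3 : κ * g w ≤ hfun w := by rw [hgval]; exact (hfb w hwabs).1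
      have huw : u w = ψ w - A * hfun w := hueq w
      rw [huw]
      have h5 : A * κ * (g ζ - ε') ≤ A * κ * g w :=
        mul_le_mul_of_nonneg_left h2.le hAκ0.le
      have h6 : A * (κ * g w) ≤ A * hfun w := mul_le_mul_of_nonneg_left h3 hA.le
      linarith [h5, h6, hkey1, hAκε, h1]
  clear_value Ω
  -- the key maximum-principle claim
  have key : ∀ w ∈ Ω, u w ≤ 0 := by
    by_contra hcon
    push_neg at hcon
    obtain ⟨z₀, hz₀Ω, hz₀pos⟩ := hcon
    have hne : (u '' Ω).Nonempty := ⟨u z₀, z₀, hz₀Ω, rfl⟩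
    have hbddabove : BddAbove (u '' Ω) := by
      refine ⟨c, ?_⟩
      rintro v ⟨w, hwΩ, rfl⟩
      have h1 : 0 < hfun w := hfpos w ((hmem0 w).1 (hΩsub hwΩ))
      have h2 : ψ w ≤ c := hbdd w (hΩsub hwΩ)
      rw [hueq w]; linarith [mul_pos hA h1]
    set s := sSup (u '' Ω) with hsdef
    have hus : ∀ w ∈ Ω, u w ≤ s := fun w hw => le_csSup hbddabove ⟨w, hw, rfl⟩
    have hs : 0 < s := lt_of_lt_of_le hz₀pos (hus z₀ hz₀Ω)
    clear_value s
    have hK : IsCompact (closure Ω) :=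
      (isCompact_closedBall (0:ℂ) 1).of_isClosed_subset isClosed_closure
        (fun w hw => (hclosure hw).1)
    have h1n : Filter.Tendsto (fun n : ℕ => 1/((n:ℝ)+1)) Filter.atTop (nhds 0) :=
      tendsto_one_div_add_atTop_nhds_zero_nat
    -- sequence lemma
    have hseq : ∀ σ : ℕ → ℂ, (∀ n, σ n ∈ Ω) → (∀ n : ℕ, s - 1/((n:ℝ)+1) ≤ u (σ n)) →
        ∀ ζ : ℂ, Filter.Tendsto σ Filter.atTop (nhds ζ) → ζ ∈ closure Ω →
        ζ ∈ Ω ∧ u ζ = s := by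
      intro σ hσΩ hσu ζ htend hζcl
      have htendW : Filter.Tendsto σ Filter.atTop (nhdsWithin ζ Ω) :=
        tendsto_nhdsWithin_iff.2 ⟨htend, Filter.Eventually.of_forall hσΩ⟩
      have hζΩ : ζ ∈ Ω := by
        by_contra hζn
        have hev := hbound ζ hζcl hζn (s/2) (by linarith)
        have hev2 : ∀ᶠ n : ℕ in Filter.atTop, u (σ n) < s/2 := htendW.eventually hev
        have hev3 : ∀ᶠ n : ℕ in Filter.atTop, 1/((n:ℝ)+1) < s/2 :=
          h1n.eventually (eventually_lt_nhds (by linarith))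
        obtain ⟨n, h1, h2⟩ := (hev2.and hev3).exists
        have := hσu n
        linarith
      refine ⟨hζΩ, le_antisymm (hus ζ hζΩ) ?_⟩
      by_contra hltu
      push_neg at hltu
      have hev := husc_u ζ hζΩ ((u ζ + s)/2) (by linarith)
      have hev2 : ∀ᶠ n : ℕ in Filter.atTop, u (σ n) < (u ζ + s)/2 := htendW.eventually hev
      have hev3 : ∀ᶠ n : ℕ in Filter.atTop, 1/((n:ℝ)+1) < (s - u ζ)/2 :=
        h1n.eventually (eventually_lt_nhds (by linarith))
      obtain ⟨n, h1, h2⟩ := (hev2.and hev3).exists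
      have := hσu n
      linarith
    -- a maximizer exists
    have hstep1 : ∃ w ∈ Ω, u w = s := by
      have hex : ∀ n : ℕ, ∃ w, w ∈ Ω ∧ s - 1/((n:ℝ)+1) < u w := by
        intro n
        have hlt : s - 1/((n:ℝ)+1) < s := by
          have : (0:ℝ) < 1/((n:ℝ)+1) := by positivity
          linarith
        rw [hsdef] at hlt
        obtain ⟨v, ⟨w, hw, rfl⟩, hv⟩ := exists_lt_of_lt_csSup hne hlt
        rw [← hsdef] at hv
        exact ⟨w, hw, hv⟩
      choose σ hσΩ hσu using hex
      obtain ⟨ζ, hζcl, φ, hφmono, hφtend⟩ :=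
        hK.tendsto_subseq (fun n => subset_closure (hσΩ n))
      have hσu2 : ∀ n : ℕ, s - 1/((n:ℝ)+1) ≤ u (σ (φ n)) := by
        intro n
        have h1 : 1/((φ n:ℝ)+1) ≤ 1/((n:ℝ)+1) := by
          have hφn : (n:ℝ)+1 ≤ ((φ n:ℕ):ℝ)+1 := by
            exact_mod_cast Nat.succ_le_succ (hφmono.le_apply (x := n))
          exact one_div_le_one_div_of_le (by positivity) hφn
        have := (hσu (φ n)).le
        linarith
      obtain ⟨hζΩ, hζs⟩ := hseq (σ ∘ φ) (fun n => hσΩ (φ n)) hσu2 ζ hφtend hζcl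
      exact ⟨ζ, hζΩ, hζs⟩
    obtain ⟨z₁, hz₁Ω, hz₁s⟩ := hstep1
    -- the maximizer set and distance infimum
    set M : Set ℂ := {w | w ∈ Ω ∧ u w = s} with hMdef
    have hMne : (Metric.infDist · Ωᶜ) '' M |>.Nonempty := ⟨_, ⟨z₁, ⟨hz₁Ω, hz₁s⟩, rfl⟩⟩
    have hMbdd : BddBelow ((Metric.infDist · Ωᶜ) '' M) := by
      refine ⟨0, ?_⟩
      rintro v ⟨w, _, rfl⟩
      exact Metric.infDist_nonneg
    set ρ := sInf ((Metric.infDist · Ωᶜ) '' M) with hρdef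
    have hρle : ∀ w ∈ M, ρ ≤ Metric.infDist w Ωᶜ := fun w hw =>
      csInf_le hMbdd ⟨w, hw, rfl⟩
    have hex2 : ∀ n : ℕ, ∃ w, w ∈ M ∧ Metric.infDist w Ωᶜ < ρ + 1/((n:ℝ)+1) := by
      intro n
      have hlt : ρ < ρ + 1/((n:ℝ)+1) := by
        have : (0:ℝ) < 1/((n:ℝ)+1) := by positivity
        linarith
      obtain ⟨v, ⟨w, hw, rfl⟩, hv⟩ := exists_lt_of_csInf_lt hMne hlt
      exact ⟨w, hw, hv⟩
    choose τ hτM hτd using hex2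
    obtain ⟨y₀, hy₀cl, φ, hφmono, hφtend⟩ :=
      hK.tendsto_subseq (fun n => subset_closure (hτM n).1)
    have hτu : ∀ n : ℕ, s - 1/((n:ℝ)+1) ≤ u (τ (φ n)) := by
      intro n
      rw [(hτM (φ n)).2]
      have : (0:ℝ) < 1/((n:ℝ)+1) := by positivity
      linarith
    obtain ⟨hy₀Ω, hy₀s⟩ := hseq (τ ∘ φ) (fun n => (hτM (φ n)).1) hτu y₀ hφtend hy₀cl
    -- infDist is minimized at y₀
    have hcomp_ne : (Ωᶜ : Set ℂ).Nonempty := by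
      refine ⟨2, fun h => ?_⟩
      have := (hmem0 2).1 (hΩsub h)
      rw [Complex.norm_two] at this
      linarith
    have hy₀ρ : Metric.infDist y₀ Ωᶜ ≤ ρ := by
      have hco : Filter.Tendsto (fun n => Metric.infDist (τ (φ n)) Ωᶜ)
          Filter.atTop (nhds (Metric.infDist y₀ Ωᶜ)) :=
        ((Metric.continuous_infDist_pt (Ωᶜ : Set ℂ)).continuousAt.tendsto).comp hφtend
      have hco2 : Filter.Tendsto (fun n : ℕ => ρ + 1/((n:ℝ)+1)) Filter.atTop (nhds ρ) := by
        have := h1n.const_add ρ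
        simpa using this
      refine le_of_tendsto_of_tendsto' hco hco2 (fun n => ?_)
      have h1 : 1/((φ n:ℝ)+1) ≤ 1/((n:ℝ)+1) := by
        have hφn : (n:ℝ)+1 ≤ ((φ n:ℕ):ℝ)+1 := by
          exact_mod_cast Nat.succ_le_succ (hφmono.le_apply (x := n))
        exact one_div_le_one_div_of_le (by positivity) hφn
      have := (hτd (φ n)).le
      linarith
    have hρpos : 0 < Metric.infDist y₀ Ωᶜ := by
      exact (hΩopen.isClosed_compl.notMem_iff_infDist_pos hcomp_ne).1
        (fun h => h hy₀Ω)
    set d₀ := Metric.infDist y₀ Ωᶜ with hd₀def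
    set r := d₀ / 2 with hrdef
    have hr : 0 < r := by rw [hrdef]; linarith
    have hballΩ : closedBall y₀ r ⊆ Ω := by
      intro w hw
      by_contra hwn
      have h1 : d₀ ≤ dist y₀ w := Metric.infDist_le_dist_of_mem hwn
      rw [mem_closedBall] at hw
      rw [dist_comm] at h1
      rw [hrdef] at hw
      linarith
    -- find a far point realizing (almost) the infimum
    obtain ⟨x, hxΩc, hxd⟩ := (Metric.infDist_lt_iff hcomp_ne).1
      (show Metric.infDist y₀ Ωᶜ < d₀ + r/2 by rw [← hd₀def]; linarith)
    set d := dist y₀ x with hddef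
    have hdd₀ : d₀ ≤ d := Metric.infDist_le_dist_of_mem hxΩc
    have hd0 : 0 < d := lt_of_lt_of_le hρpos hdd₀
    have hrd : r < d := by rw [hrdef]; linarith
    set w' : ℂ := y₀ + ((r/d : ℝ) : ℂ) * (x - y₀) with hw'def
    have habsxy : ‖x - y₀‖ = d := by
      rw [hddef, dist_comm, Complex.dist_eq]
    have hw'circ : ‖w' - y₀‖ = r := by
      rw [hw'def]
      have : y₀ + ((r/d : ℝ) : ℂ) * (x - y₀) - y₀ = ((r/d : ℝ) : ℂ) * (x - y₀) := by ring
      rw [this, norm_mul, habsxy, Complex.norm_real, Real.norm_eq_abs, _root_.abs_of_pos (div_pos hr hd0)]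
      field_simp
    have hw'Ω : w' ∈ Ω := hballΩ (by rw [mem_closedBall, Complex.dist_eq, hw'circ])
    have hw'far : Metric.infDist w' Ωᶜ < d₀ := by
      have h1 : Metric.infDist w' Ωᶜ ≤ dist w' x := Metric.infDist_le_dist_of_mem hxΩc
      have h2 : dist w' x = d - r := by
        rw [Complex.dist_eq]
        have heq : w' - x = ((1 - r/d : ℝ) : ℂ) * (y₀ - x) := by
          rw [hw'def]; push_cast; ring
        rw [heq, norm_mul, Complex.norm_real, Real.norm_eq_abs,
          _root_.abs_of_nonneg (by rw [sub_nonneg]; exact (div_le_one hd0).2 hrd.le)]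
        have : ‖y₀ - x‖ = d := by rw [hddef, Complex.dist_eq]
        rw [this]
        field_simp
      rw [h2] at h1
      rw [hrdef] at *
      linarith
    have hw'notM : u w' < s := by
      rcases lt_or_eq_of_le (hus w' hw'Ω) with h | h
      · exact h
      · exfalso
        have : w' ∈ M := ⟨hw'Ω, h⟩
        have := hρle w' this
        linarith
    -- upper semicontinuity at w' on a full neighborhood
    set s' := (u w' + s)/2 with hs'def
    have hs's : s' < s := by rw [hs'def]; linarith
    have hevs' : ∀ᶠ w in nhds w', u w < s' := by
      have h := husc_u w' hw'Ω s' (by rw [hs'def]; linarith)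
      rwa [hΩopen.nhdsWithin_eq hw'Ω] at h
    -- the angle of w' on the circle
    have hv0 : x - y₀ ≠ 0 := by
      intro h
      rw [h] at habsxy
      simp at habsxy
      linarith
    set φv := Complex.arg (x - y₀) with hφvdef
    have hexpv : Complex.exp (φv * Complex.I) = (x - y₀) / d := by
      have h := Complex.norm_mul_exp_arg_mul_I (x - y₀)
      rw [habsxy] at h
      rw [← h]
      have : (d:ℂ) ≠ 0 := by exact_mod_cast hd0.ne'
      field_simp
      rw [hφvdef, mul_comm]
    set t₀ := if φv ≤ 0 then φv + 2*π else φv with ht₀def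
    have ht₀Ioc : t₀ ∈ Set.Ioc 0 (2*π) := by
      rw [ht₀def]
      have h1 := Complex.neg_pi_lt_arg (x - y₀)
      have h2 := Complex.arg_le_pi (x - y₀)
      rw [← hφvdef] at h1 h2
      split_ifs with h
      · constructor <;> [linarith; linarith]
      · push_neg at h
        constructor <;> [linarith; linarith]
    have hexpt₀ : Complex.exp (t₀ * Complex.I) = Complex.exp (φv * Complex.I) := by
      rw [ht₀def]
      split_ifs with h
      · push_cast
        rw [add_mul, Complex.exp_add]
        have : Complex.exp (2 * π * Complex.I) = 1 := Complex.exp_two_pi_mul_I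
        rw [this, mul_one]
      · rfl
    have hcirct₀ : y₀ + (r : ℂ) * Complex.exp (t₀ * Complex.I) = w' := by
      rw [hexpt₀, hexpv, hw'def]
      have : (d:ℂ) ≠ 0 := by exact_mod_cast hd0.ne'
      push_cast
      field_simp
    -- eventually-small values of u along the circle near t₀
    have hcm : Continuous fun θ : ℝ => y₀ + (r : ℂ) * Complex.exp (θ * Complex.I) := by
      apply continuous_const.add
      apply continuous_const.mul
      exact Complex.continuous_exp.comp (Complex.continuous_ofReal.mul continuous_const)
    have hevt : ∀ᶠ θ : ℝ in nhds t₀, u (y₀ + (r : ℂ) * Complex.exp ((θ:ℝ) * Complex.I)) < s' := by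
      have htd : Filter.Tendsto (fun θ : ℝ => y₀ + (r : ℂ) * Complex.exp (θ * Complex.I))
          (nhds t₀) (nhds w') := by
        have := hcm.continuousAt (x := t₀)
        rwa [ContinuousAt, hcirct₀] at this
      exact htd.eventually hevs'
    -- points on the circle are in Ω
    have hcircΩ : ∀ θ : ℝ, y₀ + (r : ℂ) * Complex.exp (θ * Complex.I) ∈ Ω := by
      intro θ
      apply hballΩ
      rw [mem_closedBall, Complex.dist_eq]
      have : y₀ + (r : ℂ) * Complex.exp (θ * Complex.I) - y₀
          = (r : ℂ) * Complex.exp (θ * Complex.I) := by ring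
      rw [this, norm_mul, Complex.norm_real, Real.norm_eq_abs, _root_.abs_of_pos hr, Complex.norm_exp]
      simp
    have hsubmean := hψ.2 y₀ (hΩsub hy₀Ω) r hr (hballΩ.trans hΩsub)
    rw [circleMean] at hsubmean
    by_cases hint : IntervalIntegrable
        (fun θ => ψ (y₀ + (r : ℂ) * Complex.exp (θ * Complex.I))) volume 0 (2*π)
    · -- integrable case : strict sub-mean contradiction
      have hinth : IntervalIntegrable
          (fun θ => hfun (y₀ + (r : ℂ) * Complex.exp (θ * Complex.I))) volume 0 (2*π) := by
        apply Continuous.intervalIntegrable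
        apply continuous_iff_continuousAt.2
        intro θ
        have h1 : ContinuousAt (fun θ : ℝ => y₀ + (r : ℂ) * Complex.exp (θ * Complex.I)) θ :=
          hcm.continuousAt
        exact ContinuousAt.comp (g := hfun)
          (f := fun θ : ℝ => y₀ + (r : ℂ) * Complex.exp (θ * Complex.I))
          (hconth _ ((hmem0 _).1 (hΩsub (hcircΩ θ)))) h1
      have hintu : IntervalIntegrable
          (fun θ => u (y₀ + (r : ℂ) * Complex.exp (θ * Complex.I))) volume 0 (2*π) := by
        have := hint.sub (hinth.const_mul A)
        simpa [← hueq _] using this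
      have hstrict : (∫ θ in (0:ℝ)..(2*π),
          u (y₀ + (r : ℂ) * Complex.exp (θ * Complex.I))) < 2*π*s := by
        apply strict_mean hintu (fun θ => hus _ (hcircΩ θ)) hs's ht₀Ioc hevt
      have hsplit : (∫ θ in (0:ℝ)..(2*π), u (y₀ + (r : ℂ) * Complex.exp (θ * Complex.I)))
          = (∫ θ in (0:ℝ)..(2*π), ψ (y₀ + (r : ℂ) * Complex.exp (θ * Complex.I)))
            - A * (∫ θ in (0:ℝ)..(2*π), hfun (y₀ + (r : ℂ) * Complex.exp (θ * Complex.I))) := by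
        rw [← intervalIntegral.integral_const_mul,
          ← intervalIntegral.integral_sub hint (hinth.const_mul A)]
        apply intervalIntegral.integral_congr
        intro θ _
        exact hueq _
      have hmeany := hmeanh y₀ r hr (hballΩ.trans hΩsub)
      rw [hmeany] at hsplit
      have h2π : (0:ℝ) < 2*π := Real.two_pi_pos
      have hψint : 2*π*(ψ y₀) ≤ ∫ θ in (0:ℝ)..(2*π),
          ψ (y₀ + (r : ℂ) * Complex.exp (θ * Complex.I)) := by
        have h3 := mul_le_mul_of_nonneg_left hsubmean h2π.le
        rw [← mul_assoc, mul_inv_cancel₀ h2π.ne', one_mul] at h3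
        linarith
      have huy₀ : u y₀ = ψ y₀ - A * hfun y₀ := hueq y₀
      have hmul : 2*π*(ψ y₀ - A * hfun y₀) = 2*π*s := by
        rw [show ψ y₀ - A * hfun y₀ = s from by linarith [hy₀s, huy₀]]
      linarith [hstrict, hsplit, hψint, hmul]
    · -- non-integrable case : circleMean is junk 0
      rw [intervalIntegral.integral_undef hint, mul_zero] at hsubmean
      have h1 : 0 < hfun y₀ := hfpos y₀ ((hmem0 y₀).1 (hΩsub hy₀Ω))
      have h2 := hueq y₀
      linarith [hy₀s, h2, hsubmean, mul_pos hA h1, hs]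
  -- final assembly
  intro z hz
  have hzabs : ‖z‖ < 1 := (hmem0 z).1 hz
  have habsnn : (0:ℝ) ≤ ‖1 - z‖ ^ β :=
    Real.rpow_nonneg (norm_nonneg _) β
  by_cases hzδ : ‖1 - z‖ < δ
  · have hzΩ : z ∈ Ω := by rw [hΩdef]; exact ⟨hz, (hmem1 z).2 hzδ⟩
    have h1 := key z hzΩ
    rw [hueq z] at h1
    have h2 := (hfb z hzabs).2
    have h3 : ψ z ≤ A * ‖1 - z‖ ^ β := by
      linarith [mul_le_mul_of_nonneg_left h2 hA.le]
    have h4 : 0 ≤ c / δ ^ β := (div_pos hc hδβ).le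
    linarith [mul_nonneg h4 habsnn]
  · push_neg at hzδ
    have h1 : ψ z ≤ c := hbdd z hz
    have h2 : δ ^ β ≤ ‖1 - z‖ ^ β := Real.rpow_le_rpow hδ.le hzδ hβ0.le
    have h3 : c ≤ c / δ ^ β * ‖1 - z‖ ^ β := by
      have h4 : c / δ ^ β * δ ^ β = c := div_mul_cancel₀ c hδβ.ne'
      have h5 : c / δ ^ β * δ ^ β ≤ c / δ ^ β * ‖1 - z‖ ^ β :=
        mul_le_mul_of_nonneg_left h2 (div_pos hc hδβ).le
      linarith
    linarith [mul_nonneg hA.le habsnn]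
end
end

section
/- Let (φ_k)_k be a sequence of continuous functions on a compact metric space X converging pointwise to a continuous function φ, with φ_k ≤ φ for all k, and satisfying k φ_k + m φ_m ≤ (k+m) φ_{k+m} for all k, m ≥ 1. Then φ_k converges uniformly to φ on X. -/
set_option maxHeartbeats 1000000
noncomputable section
open Filter

/-- Dini/Fekete-type lemma: if continuous functions `φ_k` on a compact metric space
converge pointwise to a continuous `φ`, satisfy `φ_k ≤ φ`, and the superadditivity
`k φ_k + m φ_m ≤ (k+m) φ_{k+m}`, then the convergence is uniform. -/
theorem uniform_convergence_of_superadditive {X : Type*} [MetricSpace X] [CompactSpace X]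
    (φ : ℕ → X → ℝ) (φlim : X → ℝ)
    (hcont : ∀ k : ℕ, 1 ≤ k → Continuous (φ k)) (hlimc : Continuous φlim)
    (hptw : ∀ x, Tendsto (fun k : ℕ => φ k x) atTop (nhds (φlim x)))
    (hle : ∀ k : ℕ, 1 ≤ k → ∀ x, φ k x ≤ φlim x)
    (hsuper : ∀ k m : ℕ, 1 ≤ k → 1 ≤ m → ∀ x,
      (k : ℝ) * φ k x + (m : ℝ) * φ m x ≤ ((k : ℝ) + m) * φ (k + m) x) :
    TendstoUniformly φ φlim atTop := by
  classical
  -- Step A: φ k ≤ φ (q*k) for q ≥ 1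
  have hA : ∀ k, 1 ≤ k → ∀ q, 1 ≤ q → ∀ x, φ k x ≤ φ (q * k) x := by
    intro k hk q
    induction q with
    | zero => intro h; omega
    | succ q ih =>
      intro _ x
      rcases Nat.eq_zero_or_pos q with hq0 | hq1
      · subst hq0; simp
      · have ihx := ih hq1 x
        have hs := hsuper (q * k) k (Nat.one_le_iff_ne_zero.2 (by positivity)) hk x
        have hqk : ((q * k : ℕ) : ℝ) = (q : ℝ) * k := by push_cast; ring
        have hkey : (q + 1) * k = q * k + k := by ring
        rw [hkey]
        rw [hqk] at hs
        have hq0' : (0:ℝ) ≤ (q:ℝ) * k := by positivity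
        have hkR : (1:ℝ) ≤ (k:ℝ) := by exact_mod_cast hk
        have hqR : (1:ℝ) ≤ (q:ℝ) := by exact_mod_cast hq1
        nlinarith [mul_le_mul_of_nonneg_left ihx hq0']
  -- Step B: quantitative lower bound
  have hB : ∀ (M : ℝ) (k n : ℕ), (∀ j, 1 ≤ j → j ≤ k → ∀ y, |φ j y| ≤ M) →
      1 ≤ k → k ≤ n → ∀ x, φ k x - 2 * M * k / n ≤ φ n x := by
    intro M k n hM hk hkn x
    have hM0 : 0 ≤ M := le_trans (abs_nonneg _) (hM k hk le_rfl x)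
    have hn1 : 1 ≤ n := le_trans hk hkn
    have hn0 : (0:ℝ) < (n:ℝ) := by exact_mod_cast hn1
    set q := n / k with hq
    set r := n % k with hr
    have hqr : q * k + r = n := by rw [hq, hr, Nat.mul_comm]; exact Nat.div_add_mod n k
    have hq1 : 1 ≤ q := (Nat.one_le_div_iff hk).2 hkn
    have hrk : r < k := Nat.mod_lt _ hk
    rcases Nat.eq_zero_or_pos r with hr0 | hr1
    · -- n = q * k
      have hnqk : n = q * k := by omega
      have := hA k hk q hq1 x
      rw [← hnqk] at this
      have hd : 0 ≤ 2 * M * (k:ℝ) / n := by positivity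
      linarith
    · -- n = q*k + r, 1 ≤ r < k
      have hs := hsuper (q * k) r (Nat.one_le_iff_ne_zero.2 (by positivity)) hr1 x
      rw [hqr] at hs
      have hA' := hA k hk q hq1 x
      have hrM : -M ≤ φ r x := neg_le_of_abs_le (hM r hr1 hrk.le x)
      have hkM : φ k x ≤ M := le_of_abs_le (hM k hk le_rfl x)
      have hcast : ((q * k : ℕ) : ℝ) + (r : ℝ) = (n : ℝ) := by
        rw [← hqr]; push_cast; ring
      rw [hcast] at hs
      have hqk0 : (0:ℝ) ≤ ((q * k : ℕ) : ℝ) := Nat.cast_nonneg _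
      have hrkR : (r : ℝ) ≤ (k : ℝ) := by exact_mod_cast hrk.le
      have hr0R : (0:ℝ) ≤ (r : ℝ) := Nat.cast_nonneg _
      have key : (n:ℝ) * φ k x - 2 * M * k ≤ (n:ℝ) * φ n x := by
        nlinarith [mul_le_mul_of_nonneg_left hA' hqk0,
          mul_le_mul_of_nonneg_left hrM hr0R,
          mul_le_mul_of_nonneg_left hkM hr0R,
          mul_nonneg (sub_nonneg.2 hrkR) hM0]
      have : φ k x - φ n x ≤ 2 * M * (k:ℝ) / n := by
        rw [le_div_iff₀ hn0]; nlinarith [key]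
      linarith
  -- Main argument
  rw [Metric.tendstoUniformly_iff]
  intro ε hε
  have hε3 : 0 < ε / 3 := by linarith
  -- choose pointwise good indices
  have hchoice : ∀ x : X, ∃ k : ℕ, 1 ≤ k ∧ φlim x - ε / 3 < φ k x := by
    intro x
    have h1 : ∀ᶠ k : ℕ in atTop, φlim x - ε / 3 < φ k x :=
      (hptw x).eventually (eventually_gt_nhds (by linarith))
    have h2 : ∀ᶠ k : ℕ in atTop, 1 ≤ k := eventually_ge_atTop 1
    obtain ⟨k, hk1, hk2⟩ := (h2.and h1).exists
    exact ⟨k, hk1, hk2⟩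
  choose kf hk1 hkx using hchoice
  -- open cover
  set U : X → Set X := fun x => {y | φlim y - ε / 3 < φ (kf x) y} with hU
  have hUopen : ∀ x, IsOpen (U x) := by
    intro x
    exact isOpen_lt (by continuity) (hcont (kf x) (hk1 x))
  have hcover : (Set.univ : Set X) ⊆ ⋃ x, U x := by
    intro y _
    exact Set.mem_iUnion.2 ⟨y, hkx y⟩
  obtain ⟨t, ht⟩ := isCompact_univ.elim_finite_subcover U hUopen hcover
  set K : ℕ := max 1 (t.sup kf) with hK
  have hK1 : 1 ≤ K := le_max_left _ _
  -- uniform bound M for φ j, 1 ≤ j ≤ K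
  have hbdd : ∀ j : ℕ, ∃ Mj : ℝ, 1 ≤ j → ∀ y, |φ j y| ≤ Mj := by
    intro j
    rcases Nat.eq_zero_or_pos j with hj | hj
    · exact ⟨0, by omega⟩
    · obtain ⟨C, hC⟩ := isCompact_univ.exists_bound_of_continuousOn
        (hcont j hj).continuousOn
      exact ⟨C, fun _ y => by simpa [Real.norm_eq_abs] using hC y (Set.mem_univ y)⟩
  choose Mb hMb using hbdd
  set M : ℝ := ∑ j ∈ Finset.range (K + 1), |Mb j| with hMdef
  have hMbound : ∀ j, 1 ≤ j → j ≤ K → ∀ y, |φ j y| ≤ M := by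
    intro j hj hjK y
    have h1 : |φ j y| ≤ Mb j := hMb j hj y
    have h2 : Mb j ≤ |Mb j| := le_abs_self _
    have h3 : |Mb j| ≤ M := by
      apply Finset.single_le_sum (f := fun i => |Mb i|)
      · intro i _; exact abs_nonneg _
      · exact Finset.mem_range.2 (by omega)
    linarith
  have hM0 : 0 ≤ M := Finset.sum_nonneg fun j _ => abs_nonneg _
  -- choose N large
  obtain ⟨N0, hN0⟩ := exists_nat_gt (6 * M * K / ε)
  set N : ℕ := max (max N0 1) K with hN
  filter_upwards [eventually_ge_atTop N] with n hn
  intro y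
  -- find covering element
  obtain ⟨i, hit, hyU⟩ : ∃ i ∈ t, y ∈ U i := by
    have := ht (Set.mem_univ y)
    simpa using this
  set k := kf i with hkdef
  have hkK : k ≤ K := le_trans (Finset.le_sup hit) (le_max_right _ _)
  have hk1' : 1 ≤ k := hk1 i
  have hn1 : 1 ≤ n := le_trans (le_trans hK1 (le_max_right _ _)) hn
  have hkn : k ≤ n := le_trans hkK (le_trans (le_max_right _ _) hn)
  have hBn := hB M k n (fun j hj hjk z => hMbound j hj (le_trans hjk hkK) z) hk1' hkn y
  have hyU' : φlim y - ε / 3 < φ k y := hyU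
  have hlen : φ n y ≤ φlim y := hle n hn1 y
  -- bound the error term
  have hn0R : (0:ℝ) < (n:ℝ) := by exact_mod_cast hn1
  have hNn : (N0 : ℝ) ≤ (n : ℝ) := by
    exact_mod_cast le_trans (le_trans (le_max_left _ _) (le_max_left _ _)) hn
  have hkKR : (k:ℝ) ≤ (K:ℝ) := by exact_mod_cast hkK
  have herr : 2 * M * (k:ℝ) / n < ε / 3 := by
    have h6 : 6 * M * (K:ℝ) < ε * N0 := by
      rw [div_lt_iff₀ hε] at hN0; linarith
    rw [div_lt_iff₀ hn0R]
    have hMk : 2 * M * (k:ℝ) ≤ 2 * M * (K:ℝ) :=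
      mul_le_mul_of_nonneg_left hkKR (by linarith)
    have hεn : ε * N0 ≤ ε * n := mul_le_mul_of_nonneg_left hNn hε.le
    linarith
  rw [Real.dist_eq, abs_sub_comm, abs_of_nonpos (by linarith)]
  linarith
end
end
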